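/- Let P, Q, R be three non-collinear points on a circle with center O and radius r. If the lines through P, Q, R perpendicular respectively to lines SP, SQ, SR (for some point S distinct from P, Q, R) are concurrent, then S lies on the circle through P, Q, R. -/

import Mathlib

/-- Perpendicularity of plane vectors via the real inner product on `ℂ`. -/
def Perp (u v : ℂ) : Prop := (u * (starRingEnd ℂ) v).re = 0

set_option maxHeartbeats 1000000 in
/-- If `P, Q, R` are non-collinear points on a circle with centre `O` and radius `r`,
`S` is a point distinct from `P, Q, R`, and the lines through `P, Q, R` perpendicular
respectively to `SP, SQ, SR` are concurrent (at some point `T`), then `S` lies on the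
circle through `P, Q, R`. -/
theorem stmt_1 (P Q R S O : ℂ) (r : ℝ)
    (hncol : ¬ Collinear ℝ ({P, Q, R} : Set ℂ))
    (hP : dist O P = r) (hQ : dist O Q = r) (hR : dist O R = r)
    (hSP : S ≠ P) (hSQ : S ≠ Q) (hSR : S ≠ R)
    (hconc : ∃ T : ℂ, Perp (T - P) (S - P) ∧ Perp (T - Q) (S - Q) ∧ Perp (T - R) (S - R)) :
    dist O S = r := by
  obtain ⟨T, h1, h2, h3⟩ := hconc
  have hr : 0 ≤ r := hP ▸ dist_nonneg
  -- squared distance equations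
  have sqdist : ∀ X : ℂ, dist O X = r →
      (O.re - X.re)^2 + (O.im - X.im)^2 = r^2 := by
    intro X hX
    rw [Complex.dist_eq] at hX
    have h2 : ‖O - X‖ ^ 2 = r ^ 2 := by rw [hX]
    rw [Complex.sq_norm, Complex.normSq_apply, Complex.sub_re, Complex.sub_im] at h2
    linear_combination h2
  have hP2 := sqdist P hP
  have hQ2 := sqdist Q hQ
  have hR2 := sqdist R hR
  -- perpendicularity in coordinates
  have perp_eq : ∀ X : ℂ, Perp (T - X) (S - X) →
      (T.re - X.re) * (S.re - X.re) + (T.im - X.im) * (S.im - X.im) = 0 := by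
    intro X h
    simp only [Perp, Complex.mul_re, Complex.sub_re, Complex.sub_im, Complex.conj_re,
      Complex.conj_im] at h
    linear_combination h
  have e1 := perp_eq P h1
  have e2 := perp_eq Q h2
  have e3 := perp_eq R h3
  -- nondegeneracy: determinant nonzero
  have hdet : (Q.re - P.re) * (R.im - P.im) - (Q.im - P.im) * (R.re - P.re) ≠ 0 := by
    intro h
    apply hncol
    rw [collinear_iff_of_mem (Set.mem_insert P {Q, R})]
    by_cases hQP : Q = P
    · refine ⟨R - P, fun p hp => ?_⟩
      rcases hp with rfl | rfl | rfl
      · exact ⟨0, by simp⟩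
      · exact ⟨0, by simp [hQP]⟩
      · exact ⟨1, by simp⟩
    · have hden : (Q.re - P.re)^2 + (Q.im - P.im)^2 ≠ 0 := by
        have h0 : Q - P ≠ 0 := sub_ne_zero.mpr hQP
        have := Complex.normSq_pos.mpr h0
        rw [Complex.normSq_apply, Complex.sub_re, Complex.sub_im] at this
        nlinarith
      refine ⟨Q - P, fun p hp => ?_⟩
      rcases hp with rfl | rfl | rfl
      · exact ⟨0, by simp⟩
      · exact ⟨1, by simp⟩
      · refine ⟨((p.re - P.re) * (Q.re - P.re) + (p.im - P.im) * (Q.im - P.im)) /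
          ((Q.re - P.re)^2 + (Q.im - P.im)^2), ?_⟩
        rw [vadd_eq_add, Complex.real_smul]
        apply Complex.ext
        · simp only [Complex.add_re, Complex.mul_re, Complex.ofReal_re, Complex.ofReal_im,
            Complex.sub_re, Complex.sub_im]
          field_simp
          linear_combination (-(Q.im - P.im)) * h
        · simp only [Complex.add_im, Complex.mul_im, Complex.ofReal_re, Complex.ofReal_im,
            Complex.sub_re, Complex.sub_im]
          field_simp
          linear_combination (Q.re - P.re) * h
  -- O is the midpoint of T and S
  have hu : (O.re - (T.re + S.re)/2) * (P.re - Q.re)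
      + (O.im - (T.im + S.im)/2) * (P.im - Q.im) = 0 := by
    linear_combination (-(1:ℝ)/2) * hP2 + ((1:ℝ)/2) * hQ2 + ((1:ℝ)/2) * e1 - ((1:ℝ)/2) * e2
  have hv : (O.re - (T.re + S.re)/2) * (P.re - R.re)
      + (O.im - (T.im + S.im)/2) * (P.im - R.im) = 0 := by
    linear_combination (-(1:ℝ)/2) * hP2 + ((1:ℝ)/2) * hR2 + ((1:ℝ)/2) * e1 - ((1:ℝ)/2) * e3
  have ha : O.re - (T.re + S.re)/2 = 0 := by
    have h0 : (O.re - (T.re + S.re)/2) *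
        ((Q.re - P.re) * (R.im - P.im) - (Q.im - P.im) * (R.re - P.re)) = 0 := by
      linear_combination (-(R.im - P.im)) * hu + (Q.im - P.im) * hv
    exact (mul_eq_zero.mp h0).resolve_right hdet
  have hb : O.im - (T.im + S.im)/2 = 0 := by
    have h0 : (O.im - (T.im + S.im)/2) *
        ((Q.re - P.re) * (R.im - P.im) - (Q.im - P.im) * (R.re - P.re)) = 0 := by
      linear_combination (R.re - P.re) * hu + (-(Q.re - P.re)) * hv
    exact (mul_eq_zero.mp h0).resolve_right hdet
  have key : (O.re - S.re)^2 + (O.im - S.im)^2 = r^2 := by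
    have ho1 : O.re = (T.re + S.re)/2 := by linarith
    have ho2 : O.im = (T.im + S.im)/2 := by linarith
    rw [ho1, ho2] at hP2 ⊢
    linear_combination hP2 - e1
  rw [Complex.dist_eq]
  have habs : (‖O - S‖)^2 = r^2 := by
    rw [Complex.sq_norm, Complex.normSq_apply, Complex.sub_re, Complex.sub_im]
    linear_combination key
  nlinarith [norm_nonneg (O - S), habs, hr, sq_nonneg (‖O - S‖ - r)]
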